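/- With the braid operators σ_i on Fock space as defined on multiplicative generators by σ_i(P_i^{(n)}) = (−t^{−2})^n P_i^{(1^n)}, σ_i(P_j^{(n)}) = Σ_{k=0}^{n} (−t^{−1})^{n−k} P_j^{(k)} P_i^{(n−k)} for ⟨i,j⟩ = −1, and σ_i(P_j^{(n)}) = P_j^{(n)} for ⟨i,j⟩ = 0, and extended multiplicatively: if i, j are adjacent vertices then σ_i σ_j σ_i (P_i^{(n)}) = t^{−3n} P_j^{(1^n)}. -/

import Mathlib

open LaurentPolynomial Finset

namespace FockBraid

variable {I : Type} [DecidableEq I] (G : SimpleGraph I) [DecidableRel G.Adj]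

/-- The ground ring `ℤ[t,t⁻¹]`. -/
noncomputable abbrev R : Type := LaurentPolynomial ℤ

/-- The Fock space, modelled as the free polynomial algebra on the generators
`P_j^{(n)}`, `j ∈ I`, `n ≥ 1` (the variable `(j, m)` stands for `P_j^{(m+1)}`);
for each fixed `j` the `P_j^{(λ)}` multiply like Schur functions. -/
noncomputable abbrev Fock (I : Type) : Type := MvPolynomial (I × ℕ) R

/-- The generator `P_j^{(n)}` (with `P_j^{(0)} = 1`). -/
noncomputable def Pgen (j : I) (n : ℕ) : Fock I :=
  if n = 0 then 1 else MvPolynomial.X (j, n - 1)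

/-- `P_i^{(1^n)}`, defined from the `P_i^{(m)}` by the Giambelli (Jacobi–Trudi)
determinant `P_i^{(1^n)} = det (P_i^{(1 + l − k)})_{0 ≤ k,l < n}`. -/
noncomputable def Pcol (i : I) (n : ℕ) : Fock I :=
  Matrix.det (Matrix.of fun k l : Fin n =>
    if (k : ℕ) ≤ (l : ℕ) + 1 then Pgen i ((l : ℕ) + 1 - (k : ℕ)) else 0)

/-- The braid generator `σ_i`, the algebra endomorphism of Fock space determined by
`σ_i(P_i^{(n)}) = (−t^{−2})ⁿ P_i^{(1^n)}`,
`σ_i(P_j^{(n)}) = Σ_{k=0}^{n} (−t^{−1})^{n−k} P_j^{(k)} P_i^{(n−k)}` if `⟨i,j⟩ = −1`, and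
`σ_i(P_j^{(n)}) = P_j^{(n)}` if `⟨i,j⟩ = 0`. -/
noncomputable def braidOp (i : I) : Fock I →ₐ[R] Fock I :=
  MvPolynomial.aeval (fun p : I × ℕ =>
    let j := p.1
    let n := p.2 + 1
    if j = i then (-(LaurentPolynomial.T (-2) : R)) ^ n • Pcol i n
    else if G.Adj i j then
      ∑ k ∈ Finset.range (n + 1),
        (-(LaurentPolynomial.T (-1) : R)) ^ (n - k) • (Pgen j k * Pgen i (n - k))
    else Pgen j n)

open PowerSeries

@[simp] lemma Pgen_zero (i : I) : Pgen i 0 = 1 := rfl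

@[simp] lemma Pcol_zero (i : I) : Pcol i 0 = 1 := Matrix.det_fin_zero

/-- skip function -/
def skip (k a : ℕ) : ℕ := if a < k then a else a + 1

lemma coe_succAbove {m : ℕ} (k : Fin (m+1)) (a : Fin m) :
    ((k.succAbove a : Fin (m+1)) : ℕ) = skip (k : ℕ) (a : ℕ) := by
  rw [Fin.succAbove, skip]
  split_ifs with h1 h2 h2 <;>
    simp_all [Fin.lt_def, Fin.coe_castSucc, Fin.val_succ]

noncomputable def Nmat (i : I) (k m : ℕ) : Matrix (Fin m) (Fin m) (Fock I) :=
  Matrix.of fun a b =>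
    if skip k (a : ℕ) ≤ (b : ℕ) + 1 then Pgen i ((b : ℕ) + 1 - skip k (a : ℕ)) else 0

lemma detN_high (i : I) {k m : ℕ} (h : m ≤ k) : (Nmat i k m).det = Pcol i m := by
  unfold Pcol Nmat
  congr 1
  ext a b
  have : skip k (a : ℕ) = (a : ℕ) := by
    unfold skip; rw [if_pos (lt_of_lt_of_le a.isLt h)]
  simp [this]

lemma detN_step (i : I) {k m : ℕ} (h : k ≤ m) :
    (Nmat i k (m+1)).det = (Nmat i k m).det := by
  have hskip : skip k m = m + 1 := if_neg (by omega)
  rw [Matrix.det_succ_row _ (Fin.last m)]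
  rw [Finset.sum_eq_single (Fin.last m)]
  · have hentry : Nmat i k (m+1) (Fin.last m) (Fin.last m) = 1 := by
      simp [Nmat, Fin.val_last, hskip]
    have hsub : (Nmat i k (m+1)).submatrix (Fin.last m).succAbove (Fin.last m).succAbove
        = Nmat i k m := by
      ext a b
      simp [Matrix.submatrix_apply, Fin.succAbove_last, Nmat, Fin.coe_castSucc]
    rw [hentry, hsub, Fin.val_last, ← two_mul, pow_mul]
    norm_num
  · intro b _ hb
    have hb' : (b : ℕ) < m := by
      rcases lt_or_eq_of_le (Nat.lt_succ_iff.mp b.isLt) with h' | h'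
      · exact h'
      · exact absurd (Fin.ext h' : b = Fin.last m) hb
    have : Nmat i k (m+1) (Fin.last m) b = 0 := by
      simp only [Nmat, Matrix.of_apply, Fin.val_last, hskip]
      rw [if_neg (by omega)]
    rw [this]; ring
  · intro h'; exact absurd (Finset.mem_univ _) h'

lemma detN (i : I) {k m : ℕ} (h : k ≤ m) : (Nmat i k m).det = Pcol i k := by
  induction m with
  | zero =>
    have : k = 0 := Nat.le_zero.mp h
    subst this
    exact detN_high i le_rfl
  | succ m ih =>
    rcases Nat.lt_succ_iff_lt_or_eq.mp (Nat.lt_succ_of_le h) with h' | h'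
    · rw [detN_step i (Nat.lt_succ_iff.mp h')]
      exact ih (Nat.lt_succ_iff.mp h')
    · subst h'
      exact detN_high i le_rfl

lemma Pcol_succ_rec (i : I) (m : ℕ) :
    Pcol i (m+1) = ∑ k : Fin (m+1),
      (-1 : Fock I) ^ ((k : ℕ) + m) * Pgen i (m + 1 - (k : ℕ)) * Pcol i (k : ℕ) := by
  unfold Pcol
  rw [Matrix.det_succ_column _ (Fin.last m)]
  refine Finset.sum_congr rfl fun k _ => ?_
  have h1 : (Matrix.of fun k l : Fin (m+1) =>
      if (k : ℕ) ≤ (l : ℕ) + 1 then Pgen i ((l : ℕ) + 1 - (k : ℕ)) else 0) k (Fin.last m)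
      = Pgen i (m + 1 - (k : ℕ)) := by
    simp only [Matrix.of_apply, Fin.val_last]
    rw [if_pos (by omega)]
  have h2 : ((Matrix.of fun k l : Fin (m+1) =>
      if (k : ℕ) ≤ (l : ℕ) + 1 then Pgen i ((l : ℕ) + 1 - (k : ℕ)) else 0).submatrix
      k.succAbove (Fin.last m).succAbove) = Nmat i (k : ℕ) m := by
    ext a b
    simp only [Matrix.submatrix_apply, Fin.succAbove_last, Matrix.of_apply, Nmat,
      Fin.coe_castSucc, coe_succAbove]
  rw [h1, h2, detN i (Nat.lt_succ_iff.mp k.isLt), Fin.val_last]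
  rfl

lemma conv (i : I) (n : ℕ) :
    ∑ k ∈ Finset.range (n+1), (-1 : Fock I)^k * Pcol i k * Pgen i (n - k)
      = if n = 0 then 1 else 0 := by
  cases n with
  | zero => simp
  | succ m =>
    rw [if_neg (Nat.succ_ne_zero m), Finset.sum_range_succ]
    have hrec := Pcol_succ_rec i m
    rw [Fin.sum_univ_eq_sum_range
      (fun k => (-1 : Fock I) ^ (k + m) * Pgen i (m + 1 - k) * Pcol i k)] at hrec
    rw [Nat.sub_self, Pgen_zero, mul_one, hrec, Finset.mul_sum, ← Finset.sum_add_distrib]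
    refine Finset.sum_eq_zero fun k hk => ?_
    have hsign : (-1 : Fock I) ^ (m+1) * (-1 : Fock I) ^ (k + m) = -(-1 : Fock I) ^ k := by
      rw [← pow_add]
      have : m + 1 + (k + m) = k + (2 * m + 1) := by ring
      rw [this, pow_add, pow_succ, pow_mul]
      norm_num
      ring
    calc (-1 : Fock I) ^ k * Pcol i k * Pgen i (m + 1 - k)
          + (-1 : Fock I) ^ (m+1) * ((-1 : Fock I) ^ (k + m) * Pgen i (m + 1 - k) * Pcol i k)
        = (-1 : Fock I) ^ k * Pcol i k * Pgen i (m + 1 - k)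
          + ((-1 : Fock I) ^ (m+1) * (-1 : Fock I) ^ (k + m)) * (Pgen i (m + 1 - k) * Pcol i k) := by
          ring
      _ = 0 := by rw [hsign]; ring


/-- The series of complete generators. -/
noncomputable def hS (i : I) : PowerSeries (Fock I) := PowerSeries.mk (Pgen i)

/-- The series of elementary (column) generators. -/
noncomputable def eS (i : I) : PowerSeries (Fock I) := PowerSeries.mk (Pcol i)

/-- `t⁻¹` inside the Fock space. -/
noncomputable def tau (I : Type) : Fock I := algebraMap R (Fock I) (LaurentPolynomial.T (-1))

lemma he (i : I) : rescale (-1) (eS i) * hS i = 1 := by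
  refine PowerSeries.ext fun n => ?_
  rw [PowerSeries.coeff_mul, Finset.Nat.sum_antidiagonal_eq_sum_range_succ_mk,
    PowerSeries.coeff_one]
  rw [← conv i n]
  refine Finset.sum_congr rfl fun k hk => ?_
  rw [coeff_rescale]
  simp only [hS, eS, PowerSeries.coeff_mk]

lemma rescale_he' (i : I) (u : Fock I) : rescale u (eS i) * rescale (-u) (hS i) = 1 := by
  have h := congrArg (rescale (-u)) (he i)
  rw [map_mul, map_one, rescale_rescale] at h
  have hu : (-1 : Fock I) * -u = u := by ring
  rw [hu] at h
  exact h

lemma rescale_he (i : I) (u : Fock I) : rescale (-u) (eS i) * rescale u (hS i) = 1 := by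
  have h := congrArg (rescale u) (he i)
  rw [map_mul, map_one, rescale_rescale] at h
  have hu : (-1 : Fock I) * u = -u := by ring
  rw [hu] at h
  exact h

lemma inv_unique {A : Type*} [CommMonoid A] {f g g' : A} (h : f * g = 1) (h' : f * g' = 1) :
    g = g' := by
  calc g = g * (f * g') := by rw [h', mul_one]
    _ = g' * (f * g) := by rw [mul_comm f g', mul_comm f g, ← mul_assoc, ← mul_assoc, mul_comm g g']
    _ = g' := by rw [h, mul_one]

lemma rescale_neg_one_neg_one (f : PowerSeries (Fock I)) :
    rescale (-1) (rescale (-1) f) = f := by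
  rw [rescale_rescale]
  norm_num [rescale_one]

lemma map_rescale (σ : Fock I →ₐ[R] Fock I) {c : Fock I} (hc : σ c = c)
    (p : PowerSeries (Fock I)) :
    PowerSeries.map (σ : Fock I →+* Fock I) (rescale c p)
      = rescale c (PowerSeries.map (σ : Fock I →+* Fock I) p) := by
  refine PowerSeries.ext fun n => ?_
  simp [PowerSeries.coeff_map, coeff_rescale, map_mul, map_pow, hc]

lemma braid_tau (i : I) : braidOp G i (tau I) = tau I := (braidOp G i).commutes _


lemma braid_Pgen_self (i : I) (n : ℕ) :
    braidOp G i (Pgen i n) = (-(LaurentPolynomial.T (-2) : R)) ^ n • Pcol i n := by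
  cases n with
  | zero => simp [Pgen]
  | succ m =>
    simp only [Pgen, Nat.succ_ne_zero, if_false, Nat.succ_sub_one, braidOp,
      MvPolynomial.aeval_X]
    rw [if_pos trivial]

lemma braid_Pgen_adj {i j : I} (hij : G.Adj i j) (n : ℕ) :
    braidOp G i (Pgen j n) = ∑ k ∈ Finset.range (n + 1),
      (-(LaurentPolynomial.T (-1) : R)) ^ (n - k) • (Pgen j k * Pgen i (n - k)) := by
  cases n with
  | zero => simp [Pgen]
  | succ m =>
    simp only [Pgen, Nat.succ_ne_zero, if_false, Nat.succ_sub_one, braidOp,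
      MvPolynomial.aeval_X]
    rw [if_neg hij.ne', if_pos hij]

lemma braid_hS_self (i : I) :
    PowerSeries.map (braidOp G i : Fock I →+* Fock I) (hS i)
      = rescale (-(tau I * tau I)) (eS i) := by
  refine PowerSeries.ext fun n => ?_
  rw [PowerSeries.coeff_map, coeff_rescale]
  simp only [hS, eS, PowerSeries.coeff_mk, AlgHom.coe_toRingHom]
  rw [braid_Pgen_self, Algebra.smul_def, map_pow, map_neg]
  have h2 : (algebraMap R (Fock I)) (LaurentPolynomial.T (-2)) = tau I * tau I := by
    rw [show ((-2 : ℤ)) = (-1) + (-1) by norm_num, T_add, map_mul, tau]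
  rw [h2]

lemma braid_hS_adj {i j : I} (hij : G.Adj i j) :
    PowerSeries.map (braidOp G i : Fock I →+* Fock I) (hS j)
      = hS j * rescale (-(tau I)) (hS i) := by
  refine PowerSeries.ext fun n => ?_
  rw [PowerSeries.coeff_map, PowerSeries.coeff_mul,
    Finset.Nat.sum_antidiagonal_eq_sum_range_succ_mk]
  simp only [hS, PowerSeries.coeff_mk, AlgHom.coe_toRingHom]
  rw [braid_Pgen_adj G hij]
  refine Finset.sum_congr rfl fun k hk => ?_
  rw [coeff_rescale]
  simp only [PowerSeries.coeff_mk]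
  rw [Algebra.smul_def, map_pow, map_neg, tau]
  ring

lemma braid_eS_self (i : I) :
    PowerSeries.map (braidOp G i : Fock I →+* Fock I) (eS i)
      = rescale (-(tau I * tau I)) (hS i) := by
  have hfix : braidOp G i (-1 : Fock I) = -1 := by simp
  have h1 := congrArg (PowerSeries.map (braidOp G i : Fock I →+* Fock I)) (he i)
  rw [map_mul, map_one, map_rescale _ hfix, braid_hS_self] at h1
  -- h1 : rescale (-1) (map σ (eS i)) * rescale (-(τ*τ)) (eS i) = 1
  have h2 : rescale (-(tau I * tau I)) (eS i)
      * rescale (-1) (rescale (-(tau I * tau I)) (hS i)) = 1 := by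
    rw [rescale_rescale]
    have : (-(tau I * tau I)) * (-1 : Fock I) = tau I * tau I := by ring
    rw [this]
    exact rescale_he i (tau I * tau I)
  have h3 : rescale (-1) (PowerSeries.map (braidOp G i : Fock I →+* Fock I) (eS i))
      = rescale (-1) (rescale (-(tau I * tau I)) (hS i)) := by
    refine inv_unique (f := rescale (-(tau I * tau I)) (eS i)) ?_ h2
    rw [mul_comm] at h1
    exact h1
  have h4 := congrArg (rescale (-1 : Fock I)) h3
  rwa [rescale_neg_one_neg_one, rescale_neg_one_neg_one] at h4

lemma braid_eS_adj {i j : I} (hij : G.Adj i j) :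
    PowerSeries.map (braidOp G i : Fock I →+* Fock I) (eS j)
      = eS j * rescale (-(tau I)) (eS i) := by
  have hfix : braidOp G i (-1 : Fock I) = -1 := by simp
  have h1 := congrArg (PowerSeries.map (braidOp G i : Fock I →+* Fock I)) (he j)
  rw [map_mul, map_one, map_rescale _ hfix, braid_hS_adj G hij] at h1
  -- h1 : rescale (-1) (map σ (eS j)) * (hS j * rescale (-τ) (hS i)) = 1
  have h2 : (hS j * rescale (-(tau I)) (hS i))
      * rescale (-1) (eS j * rescale (-(tau I)) (eS i)) = 1 := by
    rw [map_mul, rescale_rescale]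
    have e1 : (-(tau I)) * (-1 : Fock I) = tau I := by ring
    rw [e1]
    have e2 : hS j * rescale (-(tau I)) (hS i) * (rescale (-1) (eS j) * rescale (tau I) (eS i))
        = (rescale (-1) (eS j) * hS j)
          * (rescale (tau I) (eS i) * rescale (-(tau I)) (hS i)) := by ring
    rw [e2, he j, rescale_he' i (tau I), one_mul]
  have h3 : rescale (-1) (PowerSeries.map (braidOp G i : Fock I →+* Fock I) (eS j))
      = rescale (-1) (eS j * rescale (-(tau I)) (eS i)) := by
    refine inv_unique (f := hS j * rescale (-(tau I)) (hS i)) ?_ h2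
    rw [mul_comm] at h1
    exact h1
  have h4 := congrArg (rescale (-1 : Fock I)) h3
  rwa [rescale_neg_one_neg_one, rescale_neg_one_neg_one] at h4


lemma main_series {i j : I} (hij : G.Adj i j) :
    PowerSeries.map (braidOp G i : Fock I →+* Fock I)
      (PowerSeries.map (braidOp G j : Fock I →+* Fock I)
        (PowerSeries.map (braidOp G i : Fock I →+* Fock I) (hS i)))
      = rescale (tau I * tau I * tau I) (eS j) := by
  have hfixj : braidOp G j (-(tau I * tau I)) = -(tau I * tau I) := by
    simp [braid_tau]
  have hfixi2 : braidOp G i (-(tau I * tau I)) = -(tau I * tau I) := by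
    simp [braid_tau]
  have hfixi1 : braidOp G i (-(tau I)) = -(tau I) := by
    simp [braid_tau]
  rw [braid_hS_self, map_rescale _ hfixj, braid_eS_adj G hij.symm,
      map_rescale _ hfixi2, map_mul, braid_eS_self, map_rescale _ hfixi1,
      braid_eS_adj G hij]
  set t := tau I with ht
  set A : Fock I := -(t * t) with hA
  set B : Fock I := -t with hB
  have step : rescale A (rescale A (hS i) * rescale B (eS j * rescale B (eS i)))
      = rescale (A*A) (hS i) * (rescale (B*A) (eS j) * rescale ((B*B)*A) (eS i)) := by
    simp only [map_mul, rescale_rescale]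
  rw [step]
  have hBA : B * A = t * t * t := by rw [hA, hB]; ring
  have hAA : A * A = (t*t)*(t*t) := by rw [hA]; ring
  have hBBA : (B*B)*A = -((t*t)*(t*t)) := by rw [hA, hB]; ring
  rw [hBA, hAA, hBBA]
  have rearr : rescale ((t*t)*(t*t)) (hS i)
        * (rescale (t*t*t) (eS j) * rescale (-((t*t)*(t*t))) (eS i))
      = (rescale (-((t*t)*(t*t))) (eS i) * rescale ((t*t)*(t*t)) (hS i))
        * rescale (t*t*t) (eS j) := by ring
  rw [rearr, rescale_he i ((t*t)*(t*t)), one_mul]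


/-- If `i` and `j` are adjacent then `σ_i σ_j σ_i (P_i^{(n)}) = t^{−3n} P_j^{(1^n)}`. -/
theorem braid_on_Pn (i j : I) (hij : G.Adj i j) (n : ℕ) :
    braidOp G i (braidOp G j (braidOp G i (Pgen i n))) =
      (LaurentPolynomial.T (-(3 * n : ℤ)) : R) • Pcol j n := by
  have hc := congrArg (PowerSeries.coeff n) (main_series G hij)
  rw [PowerSeries.coeff_map, PowerSeries.coeff_map, PowerSeries.coeff_map,
    coeff_rescale] at hc
  simp only [hS, eS, PowerSeries.coeff_mk, AlgHom.coe_toRingHom] at hc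
  rw [hc, Algebra.smul_def]
  congr 1
  rw [tau, ← map_mul, ← map_mul, ← map_pow]
  congr 1
  rw [← T_add, ← T_add, T_pow]
  congr 1
  push_cast
  ring

end FockBraid
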